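/- Let 𝔚₁, 𝔚₂ be compound BCCs over finite alphabets 𝒳, 𝒴, 𝒵 with finite state sets S₁, S₂, and suppose the compound-channel distance satisfies D(𝔚₁,𝔚₂) ≤ ε for ε ∈ (0,1). Fix n ∈ ℕ and random variables U—V—Xⁿ. Let A₀(i) := (1/n) min_{s∈Sᵢ} min{I(U;Yⁿ_s), I(U;Zⁿ_s)} for i = 1,2. Then |A₀(1) − A₀(2)| ≤ 4H₂(ε) + 4ε·max{log|𝒴|, log|𝒵|}. -/

import Mathlib

open Finset Real

noncomputable def H2 (e : ℝ) : ℝ := -(e * Real.logb 2 e) - (1 - e) * Real.logb 2 (1 - e)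

def IsPMF {α : Type*} [Fintype α] (p : α → ℝ) : Prop :=
  (∀ a, 0 ≤ p a) ∧ ∑ a, p a = 1

noncomputable def ent {α : Type*} [Fintype α] (p : α → ℝ) : ℝ :=
  -∑ a, p a * Real.logb 2 (p a)

/-- Mutual information `I(A ; B)` for a joint distribution on `α × β`. -/
noncomputable def MI {α β : Type*} [Fintype α] [Fintype β] (p : α × β → ℝ) : ℝ :=
  ent (fun a => ∑ b, p (a, b)) + ent (fun b => ∑ a, p (a, b)) - ent p

/-- Conditional mutual information `I(B ; C | A)` for a joint distribution on `α × β × γ`. -/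
noncomputable def condMI {α β γ : Type*} [Fintype α] [Fintype β] [Fintype γ]
    (p : α × β × γ → ℝ) : ℝ :=
  ent (fun x : α × β => ∑ c, p (x.1, x.2, c)) + ent (fun x : α × γ => ∑ b, p (x.1, b, x.2))
    - ent p - ent (fun a => ∑ b, ∑ c, p (a, b, c))

/-- Joint distribution of `(U, Yⁿ)` when `Xⁿ` is generated via `U — V — Xⁿ`
and sent through the memoryless extension of the channel `Ch`. -/
noncomputable def PUOut {U V X Y : Type*} [Fintype V] [Fintype X]
    (n : ℕ) (Ch : X → Y → ℝ) (PU : U → ℝ) (PVU : U → V → ℝ)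
    (E : V → (Fin n → X) → ℝ) : U × (Fin n → Y) → ℝ :=
  fun t => ∑ v, ∑ x : Fin n → X, (∏ i : Fin n, Ch (x i) (t.2 i)) * E v x * PVU t.1 v * PU t.1

/-- Joint distribution of `(U, V, Yⁿ)` when `Xⁿ` is generated via `U — V — Xⁿ`
and sent through the memoryless extension of the channel `Ch`. -/
noncomputable def PUVOut {U V X Y : Type*} [Fintype X]
    (n : ℕ) (Ch : X → Y → ℝ) (PU : U → ℝ) (PVU : U → V → ℝ)
    (E : V → (Fin n → X) → ℝ) : U × V × (Fin n → Y) → ℝ :=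
  fun t => ∑ x : Fin n → X, (∏ i : Fin n, Ch (x i) (t.2.2 i)) * E t.2.1 x * PVU t.1 t.2.1 * PU t.1

/-- `net x = -(x * logb 2 x)`, the basic entropy summand. -/
noncomputable def net (x : ℝ) : ℝ := -(x * Real.logb 2 x)

lemma net_eq (x : ℝ) : net x = Real.negMulLog x / Real.log 2 := by
  simp [net, Real.negMulLog, Real.logb, div_eq_mul_inv]; ring

lemma net_zero : net 0 = 0 := by simp [net]
lemma net_one : net 1 = 0 := by simp [net]

lemma net_nonneg {x : ℝ} (h0 : 0 ≤ x) (h1 : x ≤ 1) : 0 ≤ net x := by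
  rw [net_eq]
  exact div_nonneg (Real.negMulLog_nonneg h0 h1) (Real.log_nonneg one_le_two)

lemma net_mul {x y : ℝ} (hx : 0 ≤ x) (hy : 0 ≤ y) :
    net (x * y) = x * net y + y * net x := by
  rcases eq_or_lt_of_le hx with h | hx'
  · simp [net, ← h]
  rcases eq_or_lt_of_le hy with h | hy'
  · simp [net, ← h]
  unfold net
  rw [Real.logb_mul hx'.ne' hy'.ne']
  ring

lemma net_subadd {x y : ℝ} (hx : 0 ≤ x) (hy : 0 ≤ y) : net (x + y) ≤ net x + net y := by
  rcases eq_or_lt_of_le hx with h | hx'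
  · simp [net, ← h]
  rcases eq_or_lt_of_le hy with h | hy'
  · simp [net, ← h]
  unfold net
  have h1 : x * Real.logb 2 x ≤ x * Real.logb 2 (x + y) :=
    mul_le_mul_of_nonneg_left (Real.logb_le_logb_of_le one_lt_two hx' (by linarith)) hx
  have h2 : y * Real.logb 2 y ≤ y * Real.logb 2 (x + y) :=
    mul_le_mul_of_nonneg_left (Real.logb_le_logb_of_le one_lt_two hy' (by linarith)) hy
  nlinarith

lemma net_concave {x y a b : ℝ} (hx : 0 ≤ x) (hy : 0 ≤ y) (ha : 0 ≤ a) (hb : 0 ≤ b)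
    (hab : a + b = 1) : a * net x + b * net y ≤ net (a * x + b * y) := by
  have := (Real.strictConcaveOn_negMulLog.concaveOn).2 (Set.mem_Ici.2 hx) (Set.mem_Ici.2 hy)
    ha hb hab
  have hl : 0 < Real.log 2 := Real.log_pos one_lt_two
  simp only [smul_eq_mul] at this
  have h2 : a * (Real.negMulLog x / Real.log 2) + b * (Real.negMulLog y / Real.log 2)
      = (a * Real.negMulLog x + b * Real.negMulLog y) / Real.log 2 := by ring
  rw [net_eq, net_eq, net_eq, h2]
  exact (div_le_div_iff_of_pos_right hl).2 this

lemma ent_eq_sum_net {α : Type*} [Fintype α] (p : α → ℝ) : ent p = ∑ a, net (p a) := by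
  simp [ent, net, Finset.sum_neg_distrib]

lemma pmf_le_one {α : Type*} [Fintype α] {p : α → ℝ} (hp : IsPMF p) (a : α) : p a ≤ 1 := by
  rw [← hp.2]
  exact Finset.single_le_sum (fun b _ => hp.1 b) (Finset.mem_univ a)

lemma ent_nonneg {α : Type*} [Fintype α] {p : α → ℝ} (hp : IsPMF p) : 0 ≤ ent p := by
  rw [ent_eq_sum_net]
  exact Finset.sum_nonneg fun a _ => net_nonneg (hp.1 a) (pmf_le_one hp a)

lemma H2_eq (e : ℝ) : H2 e = net e + net (1 - e) := by simp [H2, net]; ring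

lemma H2_nonneg {e : ℝ} (h0 : 0 ≤ e) (h1 : e ≤ 1) : 0 ≤ H2 e := by
  rw [H2_eq]
  have := net_nonneg h0 h1
  have := net_nonneg (by linarith : (0:ℝ) ≤ 1 - e) (by linarith)
  linarith

/-- Gibbs / max entropy: `ent p ≤ logb 2 (card α)`. -/
lemma ent_le_logb_card {α : Type*} [Fintype α] [Nonempty α] {p : α → ℝ} (hp : IsPMF p) :
    ent p ≤ Real.logb 2 (Fintype.card α) := by
  have hl : 0 < Real.log 2 := Real.log_pos one_lt_two
  set L : ℝ := (Fintype.card α : ℝ) with hL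
  have hLpos : 0 < L := by positivity
  -- work in nats
  have key : ∀ a, Real.negMulLog (p a) ≤ 1 / L - p a + p a * Real.log L := by
    intro a
    rcases eq_or_lt_of_le (hp.1 a) with h | h
    · simp [Real.negMulLog, ← h]
      positivity
    · have h1 : Real.log (1 / (L * p a)) ≤ 1 / (L * p a) - 1 :=
        Real.log_le_sub_one_of_pos (by positivity)
      have h2 : Real.log (1 / (L * p a)) = -(Real.log L + Real.log (p a)) := by
        rw [one_div, Real.log_inv, Real.log_mul hLpos.ne' h.ne']
      have h3 : p a * Real.log (1 / (L * p a)) ≤ p a * (1 / (L * p a) - 1) :=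
        mul_le_mul_of_nonneg_left h1 (hp.1 a)
      have h4 : p a * (1 / (L * p a)) = 1 / L := by
        field_simp
      rw [h2] at h3
      simp only [Real.negMulLog]
      nlinarith
  have hsum : ∑ a, Real.negMulLog (p a) ≤ Real.log L := by
    calc ∑ a, Real.negMulLog (p a) ≤ ∑ a, (1 / L - p a + p a * Real.log L) :=
          Finset.sum_le_sum fun a _ => key a
      _ = Real.log L := by
          rw [Finset.sum_add_distrib, Finset.sum_sub_distrib, ← Finset.sum_mul, hp.2,
            Finset.sum_const, Finset.card_univ]
          rw [nsmul_eq_mul, ← hL, mul_one_div, div_self hLpos.ne']; ring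
  rw [ent_eq_sum_net]
  have : ∑ a, net (p a) = (∑ a, Real.negMulLog (p a)) / Real.log 2 := by
    rw [Finset.sum_div]; exact Finset.sum_congr rfl fun a _ => net_eq _
  rw [this, Real.logb, div_le_div_iff_of_pos_right hl]
  exact hsum

/-- `net t ≤ net s + (s - t)` for `0 ≤ t ≤ s ≤ 1/2`. -/
lemma net_le_net_add {t s : ℝ} (ht : 0 ≤ t) (hts : t ≤ s) (hs : s ≤ 1/2) :
    net t ≤ net s + (s - t) := by
  have hl : 0 < Real.log 2 := Real.log_pos one_lt_two
  rcases eq_or_lt_of_le ht with h | ht'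
  · rw [← h, net_zero]
    have := net_nonneg (le_trans ht hts) (by linarith)
    linarith
  have hs' : 0 < s := lt_of_lt_of_le ht' hts
  have key : Real.negMulLog t ≤ Real.negMulLog s + (s - t) * Real.log 2 := by
    have h1 : Real.log (s / t) ≤ s / t - 1 := Real.log_le_sub_one_of_pos (by positivity)
    have h2 : Real.log s ≤ Real.log (1/2) := Real.log_le_log hs' (by linarith)
    have h3 : Real.log (1/2) = -Real.log 2 := by rw [one_div, Real.log_inv]
    have h4 : Real.log (s/t) = Real.log s - Real.log t := Real.log_div hs'.ne' ht'.ne'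
    have h5 : t * Real.log (s/t) ≤ s - t := by
      calc t * Real.log (s/t) ≤ t * (s/t - 1) := mul_le_mul_of_nonneg_left h1 ht'.le
        _ = s - t := by field_simp
    have h6 : (s - t) * Real.log s ≤ (s - t) * (-Real.log 2) := by
      apply mul_le_mul_of_nonneg_left _ (by linarith)
      rw [← h3]; exact h2
    simp only [Real.negMulLog]
    rw [h4] at h5
    have hlog2 : (0.6931471803:ℝ) < Real.log 2 := Real.log_two_gt_d9
    nlinarith [sub_nonneg.2 hts]
  rw [net_eq, net_eq]
  calc Real.negMulLog t / Real.log 2 ≤ (Real.negMulLog s + (s - t) * Real.log 2) / Real.log 2 :=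
        (div_le_div_iff_of_pos_right hl).2 key
    _ = Real.negMulLog s / Real.log 2 + (s - t) := by field_simp

/-- `(1+t) * logb 2 (1+t) ≤ 2 * t` for `0 ≤ t ≤ 1/2`. -/
lemma one_add_logb_le {t : ℝ} (ht : 0 ≤ t) (ht2 : t ≤ 1/2) :
    (1 + t) * Real.logb 2 (1 + t) ≤ 2 * t := by
  have hl : 0 < Real.log 2 := Real.log_pos one_lt_two
  have h1t : (0:ℝ) < 1 + t := by linarith
  have hu0 : 0 ≤ t / (1 + t) := by positivity
  have hu3 : 3 * (t / (1 + t)) ≤ 1 := by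
    rw [← mul_div_assoc, div_le_one h1t]; linarith
  have h32 : (0:ℝ) < 3/2 := by norm_num
  -- exp chord
  have hconv := convexOn_exp.2 (Set.mem_univ (0:ℝ)) (Set.mem_univ (-Real.log (3/2)))
    (by linarith : (0:ℝ) ≤ 1 - 3 * (t / (1 + t))) (by positivity : (0:ℝ) ≤ 3 * (t / (1 + t)))
    (by ring)
  simp only [smul_eq_mul, mul_zero, zero_add, Real.exp_zero, mul_one] at hconv
  rw [Real.exp_neg, Real.exp_log h32] at hconv
  have hc : Real.exp (3 * (t / (1 + t)) * -Real.log (3/2)) ≤ (1 + t)⁻¹ := by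
    calc Real.exp (3 * (t / (1 + t)) * -Real.log (3/2))
        ≤ (1 - 3 * (t / (1 + t))) + 3 * (t / (1 + t)) * ((3:ℝ)/2)⁻¹ := hconv
      _ = 1 - t / (1 + t) := by ring
      _ = (1 + t)⁻¹ := by field_simp; ring
  have hlog : Real.log (1 + t) ≤ 3 * Real.log (3/2) * (t / (1 + t)) := by
    have h := Real.log_le_log (Real.exp_pos _) hc
    rw [Real.log_exp, Real.log_inv] at h
    have e : 3 * (t / (1 + t)) * -Real.log (3/2) = -(3 * Real.log (3/2) * (t / (1 + t))) := by
      ring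
    rw [e] at h
    linarith
  have h32le : 3 * Real.log (3/2) ≤ 2 * Real.log 2 := by
    have h1 : ((3:ℝ)/2)^(3:ℕ) ≤ (2:ℝ)^(2:ℕ) := by norm_num
    have h2 := Real.log_le_log (by positivity) h1
    rw [Real.log_pow, Real.log_pow] at h2
    push_cast at h2
    linarith
  have key : (1 + t) * Real.log (1 + t) ≤ 2 * Real.log 2 * t := by
    have e1 : (1 + t) * (3 * Real.log (3/2) * (t / (1 + t))) = 3 * Real.log (3/2) * t := by
      field_simp
    have h5 : (1 + t) * Real.log (1 + t) ≤ 3 * Real.log (3/2) * t := by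
      calc (1 + t) * Real.log (1 + t) ≤ (1 + t) * (3 * Real.log (3/2) * (t / (1 + t))) :=
            mul_le_mul_of_nonneg_left hlog h1t.le
        _ = 3 * Real.log (3/2) * t := e1
    have : 3 * Real.log (3/2) * t ≤ 2 * Real.log 2 * t :=
      mul_le_mul_of_nonneg_right h32le ht
    linarith
  rw [Real.logb]
  calc (1 + t) * (Real.log (1 + t) / Real.log 2) = ((1 + t) * Real.log (1 + t)) / Real.log 2 := by
        ring
    _ ≤ (2 * Real.log 2 * t) / Real.log 2 := (div_le_div_iff_of_pos_right hl).2 key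
    _ = 2 * t := by field_simp

lemma add_max_sub (x y : ℝ) : x + max (y - x) 0 = max x y := by
  rcases le_total x y with h | h
  · rw [max_eq_left (by linarith : (0:ℝ) ≤ y - x), max_eq_right h]; ring
  · rw [max_eq_right (by linarith : y - x ≤ 0), max_eq_left h]; ring

lemma abs_eq_two_max (x : ℝ) : max x 0 = (x + |x|) / 2 := by
  rcases le_total x 0 with h | h
  · rw [max_eq_right h, abs_of_nonpos h]; ring
  · rw [max_eq_left h, abs_of_nonneg h]; ring

set_option maxHeartbeats 1000000 in
/-- One-sided Alicki–Fannes-type bound. -/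
lemma ent_sub_ent_le {α : Type*} [Fintype α] [Nonempty α] {p q : α → ℝ}
    (hp : IsPMF p) (hq : IsPMF q) {ε : ℝ} (hε0 : 0 < ε) (hε1 : ε < 1)
    (hpq : ∑ a, |p a - q a| ≤ ε) :
    ent p - ent q ≤ 2 * H2 ε + 2 * ε * Real.logb 2 (Fintype.card α) := by
  have hcard1 : 1 ≤ Fintype.card α := Fintype.card_pos
  have hlogb0 : 0 ≤ Real.logb 2 (Fintype.card α) :=
    Real.logb_nonneg one_lt_two (by exact_mod_cast hcard1)
  have hH2 : 0 ≤ H2 ε := H2_nonneg hε0.le hε1.le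
  have hRHS0 : 0 ≤ 2 * H2 ε + 2 * ε * Real.logb 2 (Fintype.card α) := by positivity
  -- trivial case: p = q
  by_cases hδ0 : ∑ a, |p a - q a| = 0
  · have hpq' : p = q := by
      funext a
      have h := (Finset.sum_eq_zero_iff_of_nonneg (fun a _ => abs_nonneg _)).1 hδ0 a
        (Finset.mem_univ a)
      have := abs_eq_zero.1 h
      linarith
    rw [hpq']; linarith
  -- card = 1 case
  rcases eq_or_lt_of_le hcard1 with hc1 | hc2
  · exfalso
    obtain ⟨a0, ha0⟩ := Fintype.card_eq_one_iff.1 hc1.symm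
    have h1 : ∑ a, p a = p a0 := by
      rw [Finset.sum_eq_single a0 (fun b _ hb => absurd (ha0 b) hb) (by simp)]
    have h2 : ∑ a, q a = q a0 := by
      rw [Finset.sum_eq_single a0 (fun b _ hb => absurd (ha0 b) hb) (by simp)]
    apply hδ0
    rw [Finset.sum_eq_single a0 (fun b _ hb => absurd (ha0 b) hb) (by simp)]
    rw [hp.2] at h1; rw [hq.2] at h2
    simp [← h1, ← h2]
  have hL1 : 1 ≤ Real.logb 2 (Fintype.card α) := by
    rw [show (1:ℝ) = Real.logb 2 2 by simp]
    apply Real.logb_le_logb_of_le one_lt_two (by norm_num)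
    exact_mod_cast hc2
  -- main case
  set δ := ∑ a, |p a - q a| with hδdef
  have hδpos : 0 < δ := lt_of_le_of_ne (Finset.sum_nonneg fun a _ => abs_nonneg _) (Ne.symm hδ0)
  set t := δ / 2 with htdef
  have ht0 : 0 < t := by positivity
  have htε : t ≤ ε / 2 := by rw [htdef]; linarith
  have ht12 : t < 1/2 := by linarith
  have h1t : (0:ℝ) < 1 + t := by linarith
  have hsum0 : ∑ a, (p a - q a) = 0 := by
    rw [Finset.sum_sub_distrib, hp.2, hq.2]; ring
  have hsumr : ∑ a, max (p a - q a) 0 = t := by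
    rw [htdef]
    calc ∑ a, max (p a - q a) 0 = ∑ a, ((p a - q a) + |p a - q a|) / 2 := by
          exact Finset.sum_congr rfl fun a _ => abs_eq_two_max _
      _ = (∑ a, (p a - q a) + ∑ a, |p a - q a|) / 2 := by
          rw [← Finset.sum_add_distrib, ← Finset.sum_div]
      _ = δ / 2 := by rw [hsum0, hδdef]; ring
  have hsums : ∑ a, max (q a - p a) 0 = t := by
    rw [htdef]
    have hsum0' : ∑ a, (q a - p a) = 0 := by
      rw [Finset.sum_sub_distrib, hp.2, hq.2]; ring
    calc ∑ a, max (q a - p a) 0 = ∑ a, ((q a - p a) + |q a - p a|) / 2 := by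
          exact Finset.sum_congr rfl fun a _ => abs_eq_two_max _
      _ = (∑ a, (q a - p a) + ∑ a, |q a - p a|) / 2 := by
          rw [← Finset.sum_add_distrib, ← Finset.sum_div]
      _ = δ / 2 := by
          rw [hsum0', hδdef]
          simp only [abs_sub_comm]
          ring
  set r : α → ℝ := fun a => max (p a - q a) 0 / t with hrdef
  set s : α → ℝ := fun a => max (q a - p a) 0 / t with hsdef
  have hr : IsPMF r := by
    constructor
    · intro a; exact div_nonneg (le_max_right _ _) ht0.le
    · rw [← Finset.sum_div, hsumr, div_self ht0.ne']
  have hs : IsPMF s := by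
    constructor
    · intro a; exact div_nonneg (le_max_right _ _) ht0.le
    · rw [← Finset.sum_div, hsums, div_self ht0.ne']
  set lam : ℝ := (1 + t)⁻¹ with hlam
  set mu : ℝ := t / (1 + t) with hmu
  have hlam0 : 0 ≤ lam := by positivity
  have hmu0 : 0 ≤ mu := by positivity
  have hlammu : lam + mu = 1 := by rw [hlam, hmu]; field_simp
  have hMp : ∀ a, lam * p a + mu * s a = max (p a) (q a) / (1 + t) := by
    intro a
    rw [hlam, hmu, hsdef]
    have : t / (1 + t) * (max (q a - p a) 0 / t) = max (q a - p a) 0 / (1 + t) := by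
      field_simp
    rw [this, ← add_max_sub (p a) (q a)]
    field_simp
  have hMq : ∀ a, lam * q a + mu * r a = max (p a) (q a) / (1 + t) := by
    intro a
    rw [hlam, hmu, hrdef]
    have : t / (1 + t) * (max (p a - q a) 0 / t) = max (p a - q a) 0 / (1 + t) := by
      field_simp
    rw [this, max_comm (p a) (q a), ← add_max_sub (q a) (p a)]
    field_simp
  -- lower bound
  have lower : lam * ent p ≤ ∑ a, net (max (p a) (q a) / (1 + t)) := by
    rw [ent_eq_sum_net, Finset.mul_sum]
    apply Finset.sum_le_sum
    intro a _
    calc lam * net (p a) ≤ lam * net (p a) + mu * net (s a) := by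
          have : 0 ≤ mu * net (s a) :=
            mul_nonneg hmu0 (net_nonneg (hs.1 a) (pmf_le_one hs a))
          linarith
      _ ≤ net (lam * p a + mu * s a) := net_concave (hp.1 a) (hs.1 a) hlam0 hmu0 hlammu
      _ = net (max (p a) (q a) / (1 + t)) := by rw [hMp a]
  -- upper bound
  have upper : ∑ a, net (max (p a) (q a) / (1 + t))
      ≤ lam * ent q + mu * Real.logb 2 (Fintype.card α) + (net lam + net mu) := by
    have step : ∀ a, net (max (p a) (q a) / (1 + t))
        ≤ lam * net (q a) + q a * net lam + (mu * net (r a) + r a * net mu) := by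
      intro a
      rw [← hMq a]
      calc net (lam * q a + mu * r a) ≤ net (lam * q a) + net (mu * r a) :=
            net_subadd (mul_nonneg hlam0 (hq.1 a)) (mul_nonneg hmu0 (hr.1 a))
        _ = lam * net (q a) + q a * net lam + (mu * net (r a) + r a * net mu) := by
            rw [net_mul hlam0 (hq.1 a), net_mul hmu0 (hr.1 a)]
    calc ∑ a, net (max (p a) (q a) / (1 + t))
        ≤ ∑ a, (lam * net (q a) + q a * net lam + (mu * net (r a) + r a * net mu)) :=
          Finset.sum_le_sum fun a _ => step a
      _ = lam * ent q + net lam + (mu * ent r + net mu) := by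
          rw [ent_eq_sum_net, ent_eq_sum_net]
          rw [Finset.sum_add_distrib, Finset.sum_add_distrib, Finset.sum_add_distrib,
            ← Finset.mul_sum, ← Finset.mul_sum, ← Finset.sum_mul, ← Finset.sum_mul,
            hq.2, hr.2]
          ring
      _ ≤ lam * ent q + mu * Real.logb 2 (Fintype.card α) + (net lam + net mu) := by
          have := ent_le_logb_card hr
          have := mul_le_mul_of_nonneg_left this hmu0
          linarith
  have combined : lam * ent p ≤ lam * ent q + mu * Real.logb 2 (Fintype.card α)
      + (net lam + net mu) := le_trans lower upper
  -- multiply by (1+t)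
  have main : ent p ≤ ent q + t * Real.logb 2 (Fintype.card α)
      + (1 + t) * (net lam + net mu) := by
    have h := mul_le_mul_of_nonneg_left combined h1t.le
    have e1 : (1 + t) * (lam * ent p) = ent p := by rw [hlam]; field_simp
    have e2 : (1 + t) * (lam * ent q + mu * Real.logb 2 (Fintype.card α) + (net lam + net mu))
        = ent q + t * Real.logb 2 (Fintype.card α) + (1 + t) * (net lam + net mu) := by
      rw [hlam, hmu]; field_simp
    rw [e1, e2] at h
    exact h
  -- identity for the correction term
  have ident : (1 + t) * (net lam + net mu) = net t + (1 + t) * Real.logb 2 (1 + t) := by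
    have e1 : net lam = (1 + t)⁻¹ * Real.logb 2 (1 + t) := by
      rw [hlam]; unfold net; rw [Real.logb_inv]; ring
    have e2 : net mu = -(t / (1 + t) * (Real.logb 2 t - Real.logb 2 (1 + t))) := by
      rw [hmu]; unfold net; rw [Real.logb_div ht0.ne' h1t.ne']
    rw [e1, e2]
    unfold net
    field_simp
    ring
  rw [ident] at main
  -- numeric chain
  have c1 : (1 + t) * Real.logb 2 (1 + t) ≤ 2 * t := one_add_logb_le ht0.le (by linarith)
  have c2 : net t ≤ net (ε/2) + (ε/2 - t) := net_le_net_add ht0.le htε (by linarith)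
  have c3 : net (ε/2) = net ε / 2 + ε / 2 := by
    unfold net
    rw [Real.logb_div hε0.ne' two_ne_zero, Real.logb_self_eq_one one_lt_two]
    ring
  have hnetε : 0 ≤ net ε := net_nonneg hε0.le hε1.le
  have hnet1ε : 0 ≤ net (1 - ε) := net_nonneg (by linarith) (by linarith)
  rw [H2_eq]
  have httε : t * Real.logb 2 (Fintype.card α) ≤ (ε/2) * Real.logb 2 (Fintype.card α) :=
    mul_le_mul_of_nonneg_right (by linarith) (by linarith)
  have hprod : (3/2) * ε * 1 ≤ (3/2) * ε * Real.logb 2 (Fintype.card α) :=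
    mul_le_mul_of_nonneg_left hL1 (by linarith)
  linarith

/-- Two-sided Alicki–Fannes-type bound. -/
lemma abs_ent_sub_le {α : Type*} [Fintype α] [Nonempty α] {p q : α → ℝ}
    (hp : IsPMF p) (hq : IsPMF q) {ε : ℝ} (hε0 : 0 < ε) (hε1 : ε < 1)
    (hpq : ∑ a, |p a - q a| ≤ ε) :
    |ent p - ent q| ≤ 2 * H2 ε + 2 * ε * Real.logb 2 (Fintype.card α) := by
  rw [abs_sub_le_iff]
  constructor
  · exact ent_sub_ent_le hp hq hε0 hε1 hpq
  · apply ent_sub_ent_le hq hp hε0 hε1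
    simpa [abs_sub_comm] using hpq

lemma ent_prod_split {W Y : Type*} [Fintype W] [Fintype Y] (P : W × Y → ℝ) :
    ent P = ∑ w, ∑ y, net (P (w, y)) := by
  rw [ent_eq_sum_net, Fintype.sum_prod_type]

/-- Conditional continuity of entropy on a product space. -/
lemma condent_diff {W Y : Type*} [Fintype W] [Fintype Y] [Nonempty Y]
    (P Q : W × Y → ℝ) (hP : IsPMF P) (hQ : IsPMF Q)
    (hmarg : ∀ w, ∑ y, P (w, y) = ∑ y, Q (w, y))
    {ε : ℝ} (hε0 : 0 < ε) (hε1 : ε < 1)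
    (hcond : ∀ w, ∑ y, |P (w, y) - Q (w, y)| ≤ ε * ∑ y, P (w, y)) :
    |ent P - ent Q| ≤ 2 * H2 ε + 2 * ε * Real.logb 2 (Fintype.card Y) := by
  set B := 2 * H2 ε + 2 * ε * Real.logb 2 (Fintype.card Y) with hB
  have hB0 : 0 ≤ B := by
    have h1 : 0 ≤ H2 ε := H2_nonneg hε0.le hε1.le
    have h2 : 0 ≤ Real.logb 2 (Fintype.card Y) :=
      Real.logb_nonneg one_lt_two (by exact_mod_cast (Fintype.card_pos (α := Y)))
    positivity
  set m : W → ℝ := fun w => ∑ y, P (w, y) with hm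
  have hm0 : ∀ w, 0 ≤ m w := fun w => Finset.sum_nonneg fun y _ => hP.1 _
  have hmsum : ∑ w, m w = 1 := by
    rw [hm, ← Fintype.sum_prod_type]
    exact hP.2
  have key : ∀ w, |(∑ y, net (P (w, y))) - ∑ y, net (Q (w, y))| ≤ m w * B := by
    intro w
    rcases eq_or_lt_of_le (hm0 w) with hw | hw
    · -- zero marginal: everything vanishes
      have hPz : ∀ y, P (w, y) = 0 := fun y =>
        (Finset.sum_eq_zero_iff_of_nonneg (fun y _ => hP.1 _)).1 hw.symm y (Finset.mem_univ y)
      have hQz : ∀ y, Q (w, y) = 0 := fun y =>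
        (Finset.sum_eq_zero_iff_of_nonneg (fun y _ => hQ.1 _)).1
          (by rw [← hmarg w]; exact hw.symm) y (Finset.mem_univ y)
      simp [hPz, hQz, net_zero, ← hw]
    · set pw : Y → ℝ := fun y => P (w, y) / m w with hpw
      set qw : Y → ℝ := fun y => Q (w, y) / m w with hqw
      have hpwP : IsPMF pw := by
        constructor
        · intro y; exact div_nonneg (hP.1 _) (hm0 w)
        · rw [hpw, ← Finset.sum_div]; exact div_self hw.ne'
      have hqwP : IsPMF qw := by
        constructor
        · intro y; exact div_nonneg (hQ.1 _) (hm0 w)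
        · rw [hqw, ← Finset.sum_div, ← hmarg w]; exact div_self hw.ne'
      have hP' : ∀ y, P (w, y) = m w * pw y := by
        intro y; rw [hpw]; field_simp
      have hQ' : ∀ y, Q (w, y) = m w * qw y := by
        intro y; rw [hqw]; field_simp
      have hFP : ∑ y, net (P (w, y)) = m w * ent pw + net (m w) := by
        calc ∑ y, net (P (w, y)) = ∑ y, (m w * net (pw y) + pw y * net (m w)) := by
              apply Finset.sum_congr rfl
              intro y _
              rw [hP' y, net_mul (hm0 w) (hpwP.1 y)]
          _ = m w * ent pw + net (m w) := by
              rw [Finset.sum_add_distrib, ← Finset.mul_sum, ← Finset.sum_mul, hpwP.2,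
                ent_eq_sum_net]
              ring
      have hFQ : ∑ y, net (Q (w, y)) = m w * ent qw + net (m w) := by
        calc ∑ y, net (Q (w, y)) = ∑ y, (m w * net (qw y) + qw y * net (m w)) := by
              apply Finset.sum_congr rfl
              intro y _
              rw [hQ' y, net_mul (hm0 w) (hqwP.1 y)]
          _ = m w * ent qw + net (m w) := by
              rw [Finset.sum_add_distrib, ← Finset.mul_sum, ← Finset.sum_mul, hqwP.2,
                ent_eq_sum_net]
              ring
      have hL1 : ∑ y, |pw y - qw y| ≤ ε := by
        have : ∑ y, |pw y - qw y| = (∑ y, |P (w, y) - Q (w, y)|) / m w := by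
          rw [Finset.sum_div]
          apply Finset.sum_congr rfl
          intro y _
          rw [hpw, hqw, div_sub_div_same, abs_div, abs_of_pos hw]
        rw [this, div_le_iff₀ hw]
        calc ∑ y, |P (w, y) - Q (w, y)| ≤ ε * ∑ y, P (w, y) := hcond w
          _ = ε * m w := rfl
      have := abs_ent_sub_le hpwP hqwP hε0 hε1 hL1
      calc |(∑ y, net (P (w, y))) - ∑ y, net (Q (w, y))|
          = m w * |ent pw - ent qw| := by
            rw [hFP, hFQ, show m w * ent pw + net (m w) - (m w * ent qw + net (m w))
              = m w * (ent pw - ent qw) by ring, abs_mul, abs_of_pos hw]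
        _ ≤ m w * B := mul_le_mul_of_nonneg_left this (hm0 w)
  calc |ent P - ent Q| = |∑ w, ((∑ y, net (P (w, y))) - ∑ y, net (Q (w, y)))| := by
        rw [ent_prod_split, ent_prod_split, Finset.sum_sub_distrib]
    _ ≤ ∑ w, |(∑ y, net (P (w, y))) - ∑ y, net (Q (w, y))| :=
        Finset.abs_sum_le_sum_abs _ _
    _ ≤ ∑ w, m w * B := Finset.sum_le_sum fun w _ => key w
    _ = B := by rw [← Finset.sum_mul, hmsum, one_mul]

lemma ent_comp_equiv {α β : Type*} [Fintype α] [Fintype β] (e : β ≃ α) (p : α → ℝ) :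
    ent (fun b => p (e b)) = ent p := by
  rw [ent_eq_sum_net, ent_eq_sum_net]
  exact Equiv.sum_comp e (fun a => net (p a))

lemma sum_pi_prod {ι Y : Type*} [Fintype ι] [DecidableEq ι] [Fintype Y] (f : ι → Y → ℝ) :
    ∑ yy : ι → Y, ∏ i, f i (yy i) = ∏ i, ∑ y, f i y := by
  have h := Finset.prod_univ_sum (fun _ : ι => (Finset.univ : Finset Y)) (fun i y => f i y)
  rw [Fintype.piFinset_univ] at h
  exact h.symm

/-- Reassembling `W₀ × (Fin n → Y)` by splitting off coordinate `kk`. -/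
def assembleEquiv {n : ℕ} (kk : Fin n) (W₀ Y : Type*) :
    ((W₀ × ({j : Fin n // j ≠ kk} → Y)) × Y) ≃ (W₀ × (Fin n → Y)) where
  toFun t := (t.1.1, fun j => if h : j = kk then t.2 else t.1.2 ⟨j, h⟩)
  invFun t := ((t.1, fun j => t.2 j.1), t.2 kk)
  left_inv t := by
    obtain ⟨⟨w, r⟩, yk⟩ := t
    simp only [Prod.mk.injEq]
    refine ⟨⟨trivial, ?_⟩, by simp⟩
    funext j
    simp [j.2]
  right_inv t := by
    obtain ⟨w, yy⟩ := t
    simp only [Prod.mk.injEq]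
    refine ⟨trivial, ?_⟩
    funext j
    by_cases h : j = kk
    · subst h; simp
    · simp [h]

lemma assembleEquiv_snd_apply {n : ℕ} (kk : Fin n) {W₀ Y : Type*}
    (w : W₀) (r : {j : Fin n // j ≠ kk} → Y) (yk : Y) (j : Fin n) :
    ((assembleEquiv kk W₀ Y ((w, r), yk)).2) j = if h : j = kk then yk else r ⟨j, h⟩ := rfl

lemma assembleEquiv_fst_apply {n : ℕ} (kk : Fin n) {W₀ Y : Type*}
    (w : W₀) (r : {j : Fin n // j ≠ kk} → Y) (yk : Y) :
    (assembleEquiv kk W₀ Y ((w, r), yk)).1 = w := rfl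

set_option maxHeartbeats 2000000 in
/-- Telescoping continuity of the output entropy of a memoryless channel extension. -/
lemma ent_tele {W₀ X Y : Type*} [Fintype W₀] [Fintype X] [Fintype Y] [Nonempty Y]
    {n : ℕ} (G : W₀ × (Fin n → X) → ℝ) (hG : IsPMF G)
    (C1 C2 : X → Y → ℝ) (h1 : ∀ x, IsPMF (C1 x)) (h2 : ∀ x, IsPMF (C2 x))
    {ε : ℝ} (hε0 : 0 < ε) (hε1 : ε < 1) (hd : ∀ x, ∑ y, |C1 x y - C2 x y| ≤ ε) :
    |ent (fun t : W₀ × (Fin n → Y) => ∑ x : Fin n → X, G (t.1, x) * ∏ i, C1 (x i) (t.2 i))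
      - ent (fun t : W₀ × (Fin n → Y) => ∑ x : Fin n → X, G (t.1, x) * ∏ i, C2 (x i) (t.2 i))|
      ≤ n * (2 * H2 ε + 2 * ε * Real.logb 2 (Fintype.card Y)) := by
  set B := 2 * H2 ε + 2 * ε * Real.logb 2 (Fintype.card Y) with hBdef
  set Hq : ℕ → (W₀ × (Fin n → Y) → ℝ) := fun k t =>
    ∑ x : Fin n → X, G (t.1, x) *
      ∏ i : Fin n, (if i.val < k then C1 (x i) (t.2 i) else C2 (x i) (t.2 i)) with hHq
  have hHq0 : (fun t : W₀ × (Fin n → Y) =>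
      ∑ x : Fin n → X, G (t.1, x) * ∏ i, C2 (x i) (t.2 i)) = Hq 0 := by
    funext t
    refine Finset.sum_congr rfl fun x _ => ?_
    have h0 : ∀ i : Fin n, (if i.val < 0 then C1 (x i) (t.2 i) else C2 (x i) (t.2 i))
        = C2 (x i) (t.2 i) := fun i => if_neg (Nat.not_lt_zero _)
    rw [Finset.prod_congr rfl fun i _ => h0 i]
  have hHqn : (fun t : W₀ × (Fin n → Y) =>
      ∑ x : Fin n → X, G (t.1, x) * ∏ i, C1 (x i) (t.2 i)) = Hq n := by
    funext t
    refine Finset.sum_congr rfl fun x _ => ?_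
    have h0 : ∀ i : Fin n, (if i.val < n then C1 (x i) (t.2 i) else C2 (x i) (t.2 i))
        = C1 (x i) (t.2 i) := fun i => if_pos i.isLt
    rw [Finset.prod_congr rfl fun i _ => h0 i]
  have hHqnn : ∀ k (t : W₀ × (Fin n → Y)), 0 ≤ Hq k t := by
    intro k t
    apply Finset.sum_nonneg
    intro x _
    apply mul_nonneg (hG.1 _)
    apply Finset.prod_nonneg
    intro i _
    by_cases h : i.val < k
    · simp only [h, if_true]; exact (h1 _).1 _
    · simp only [h, if_false]; exact (h2 _).1 _
  have hHqPMF : ∀ k, IsPMF (Hq k) := by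
    intro k
    refine ⟨hHqnn k, ?_⟩
    rw [Fintype.sum_prod_type]
    have hrow : ∀ w : W₀, ∑ yy : Fin n → Y, Hq k (w, yy) = ∑ x : Fin n → X, G (w, x) := by
      intro w
      rw [Finset.sum_comm]
      refine Finset.sum_congr rfl fun x _ => ?_
      dsimp only
      rw [← Finset.mul_sum]
      have h5 : ∑ yy : Fin n → Y,
          ∏ i : Fin n, (if i.val < k then C1 (x i) (yy i) else C2 (x i) (yy i))
          = ∏ i : Fin n, ∑ y, (if i.val < k then C1 (x i) y else C2 (x i) y) :=
        sum_pi_prod (fun (i : Fin n) y => if i.val < k then C1 (x i) y else C2 (x i) y)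
      rw [h5]
      have h6 : ∏ i : Fin n, ∑ y, (if i.val < k then C1 (x i) y else C2 (x i) y) = 1 := by
        apply Finset.prod_eq_one
        intro i _
        by_cases h : i.val < k
        · simp only [h, if_true]; exact (h1 _).2
        · simp only [h, if_false]; exact (h2 _).2
      rw [h6, mul_one]
    rw [Finset.sum_congr rfl fun w _ => hrow w, ← Fintype.sum_prod_type]
    exact hG.2
  have hstep : ∀ k, k < n → |ent (Hq (k + 1)) - ent (Hq k)| ≤ B := by
    intro k hk
    set kk : Fin n := ⟨k, hk⟩ with hkk
    set e := assembleEquiv kk W₀ Y with he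
    set A : (Fin n → X) → ({j : Fin n // j ≠ kk} → Y) → ℝ := fun x r =>
      ∏ j : {j : Fin n // j ≠ kk},
        (if j.1.val < k then C1 (x j.1) (r j) else C2 (x j.1) (r j)) with hA
    have hAnn : ∀ x r, 0 ≤ A x r := by
      intro x r
      apply Finset.prod_nonneg
      intro j _
      by_cases h : j.1.val < k
      · simp only [h, if_true]; exact (h1 _).1 _
      · simp only [h, if_false]; exact (h2 _).1 _
    have hGAnn : ∀ (w : W₀) x r, 0 ≤ G (w, x) * A x r :=
      fun w x r => mul_nonneg (hG.1 _) (hAnn x r)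
    -- explicit form of the hybrids under the reassembly equivalence
    have hform : ∀ m, m = k ∨ m = k + 1 → ∀ (w : W₀) (r : {j : Fin n // j ≠ kk} → Y) (yk : Y),
        Hq m (e ((w, r), yk)) = ∑ x : Fin n → X,
          (G (w, x) * A x r) * (if k < m then C1 (x kk) yk else C2 (x kk) yk) := by
      intro m hm w r yk
      show ∑ x : Fin n → X, G ((e ((w, r), yk)).1, x) *
          ∏ i : Fin n, (if i.val < m then C1 (x i) ((e ((w, r), yk)).2 i)
            else C2 (x i) ((e ((w, r), yk)).2 i)) = _
      have hyy : ∀ j : Fin n, (e ((w, r), yk)).2 j = if h : j = kk then yk else r ⟨j, h⟩ :=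
        fun j => rfl
      have hw : (e ((w, r), yk)).1 = w := rfl
      refine Finset.sum_congr rfl fun x _ => ?_
      rw [hw]
      rw [← Finset.mul_prod_erase Finset.univ _ (Finset.mem_univ kk)]
      have hfkk : (if kk.val < m then C1 (x kk) ((e ((w, r), yk)).2 kk)
          else C2 (x kk) ((e ((w, r), yk)).2 kk))
          = (if k < m then C1 (x kk) yk else C2 (x kk) yk) := by
        rw [hyy kk, dif_pos rfl]
      have herase : ∏ i ∈ Finset.univ.erase kk,
          (if i.val < m then C1 (x i) ((e ((w, r), yk)).2 i)
            else C2 (x i) ((e ((w, r), yk)).2 i)) = A x r := by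
        have hstep1 : ∀ i ∈ Finset.univ.erase kk,
            (if i.val < m then C1 (x i) ((e ((w, r), yk)).2 i)
              else C2 (x i) ((e ((w, r), yk)).2 i))
            = (if i.val < k then C1 (x i) ((e ((w, r), yk)).2 i)
              else C2 (x i) ((e ((w, r), yk)).2 i)) := by
          intro i hi
          have hik : i ≠ kk := (Finset.mem_erase.1 hi).1
          have hvk : i.val ≠ k := by
            intro hc
            apply hik
            apply Fin.ext
            simpa [hkk] using hc
          rcases hm with hm | hm
          · rw [hm]
          · subst hm
            by_cases hlt : i.val < k
            · rw [if_pos hlt, if_pos (by omega)]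
            · rw [if_neg hlt, if_neg (by omega)]
        rw [Finset.prod_congr rfl hstep1]
        rw [hA]
        rw [Finset.prod_subtype (p := fun i => i ≠ kk) (Finset.univ.erase kk)
          (fun i => by simp [Finset.mem_erase]) (fun i =>
            if i.val < k then C1 (x i) ((e ((w, r), yk)).2 i)
              else C2 (x i) ((e ((w, r), yk)).2 i))]
        refine Finset.prod_congr rfl fun j _ => ?_
        have : (e ((w, r), yk)).2 (j : Fin n) = r j := by
          rw [hyy (j : Fin n), dif_neg j.2]
        rw [this]
      rw [hfkk, herase]
      ring
    have hPform : ∀ (w : W₀) (r : {j : Fin n // j ≠ kk} → Y) (yk : Y),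
        Hq (k + 1) (e ((w, r), yk)) = ∑ x : Fin n → X, (G (w, x) * A x r) * C1 (x kk) yk := by
      intro w r yk
      rw [hform (k + 1) (Or.inr rfl) w r yk]
      refine Finset.sum_congr rfl fun x _ => ?_
      rw [if_pos (Nat.lt_succ_self k)]
    have hQform : ∀ (w : W₀) (r : {j : Fin n // j ≠ kk} → Y) (yk : Y),
        Hq k (e ((w, r), yk)) = ∑ x : Fin n → X, (G (w, x) * A x r) * C2 (x kk) yk := by
      intro w r yk
      rw [hform k (Or.inl rfl) w r yk]
      refine Finset.sum_congr rfl fun x _ => ?_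
      rw [if_neg (lt_irrefl k)]
    -- marginal sums
    have hsum1 : ∀ (w : W₀) (r : {j : Fin n // j ≠ kk} → Y),
        ∑ yk, ∑ x : Fin n → X, (G (w, x) * A x r) * C1 (x kk) yk
          = ∑ x : Fin n → X, G (w, x) * A x r := by
      intro w r
      rw [Finset.sum_comm]
      refine Finset.sum_congr rfl fun x _ => ?_
      rw [← Finset.mul_sum, (h1 _).2, mul_one]
    have hsum2 : ∀ (w : W₀) (r : {j : Fin n // j ≠ kk} → Y),
        ∑ yk, ∑ x : Fin n → X, (G (w, x) * A x r) * C2 (x kk) yk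
          = ∑ x : Fin n → X, G (w, x) * A x r := by
      intro w r
      rw [Finset.sum_comm]
      refine Finset.sum_congr rfl fun x _ => ?_
      rw [← Finset.mul_sum, (h2 _).2, mul_one]
    have hcd := condent_diff (fun t' : (W₀ × ({j : Fin n // j ≠ kk} → Y)) × Y => Hq (k + 1) (e t'))
      (fun t' => Hq k (e t')) ?_ ?_ ?_ hε0 hε1 ?_
    · rw [ent_comp_equiv e (Hq (k + 1)), ent_comp_equiv e (Hq k)] at hcd
      exact hcd
    · exact ⟨fun t' => hHqnn _ _, by rw [Equiv.sum_comp e (Hq (k + 1))]; exact (hHqPMF _).2⟩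
    · exact ⟨fun t' => hHqnn _ _, by rw [Equiv.sum_comp e (Hq k)]; exact (hHqPMF _).2⟩
    · rintro ⟨w, r⟩
      rw [Finset.sum_congr rfl fun yk _ => hPform w r yk,
        Finset.sum_congr rfl fun yk _ => hQform w r yk, hsum1 w r, hsum2 w r]
    · rintro ⟨w, r⟩
      rw [Finset.sum_congr rfl fun yk _ => hPform w r yk]
      rw [hsum1 w r]
      calc ∑ yk, |Hq (k + 1) (e ((w, r), yk)) - Hq k (e ((w, r), yk))|
          = ∑ yk, |∑ x : Fin n → X, (G (w, x) * A x r) * (C1 (x kk) yk - C2 (x kk) yk)| := by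
            refine Finset.sum_congr rfl fun yk _ => ?_
            rw [hPform w r yk, hQform w r yk, ← Finset.sum_sub_distrib]
            congr 1
            exact Finset.sum_congr rfl fun x _ => by ring
        _ ≤ ∑ yk, ∑ x : Fin n → X, (G (w, x) * A x r) * |C1 (x kk) yk - C2 (x kk) yk| := by
            refine Finset.sum_le_sum fun yk _ => ?_
            calc |∑ x : Fin n → X, (G (w, x) * A x r) * (C1 (x kk) yk - C2 (x kk) yk)|
                ≤ ∑ x : Fin n → X, |(G (w, x) * A x r) * (C1 (x kk) yk - C2 (x kk) yk)| :=
                  Finset.abs_sum_le_sum_abs _ _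
              _ = ∑ x : Fin n → X, (G (w, x) * A x r) * |C1 (x kk) yk - C2 (x kk) yk| := by
                  refine Finset.sum_congr rfl fun x _ => ?_
                  rw [abs_mul, abs_of_nonneg (hGAnn w x r)]
        _ = ∑ x : Fin n → X, (G (w, x) * A x r) * ∑ yk, |C1 (x kk) yk - C2 (x kk) yk| := by
            rw [Finset.sum_comm]
            exact Finset.sum_congr rfl fun x _ => by rw [← Finset.mul_sum]
        _ ≤ ∑ x : Fin n → X, (G (w, x) * A x r) * ε :=
            Finset.sum_le_sum fun x _ =>
              mul_le_mul_of_nonneg_left (hd (x kk)) (hGAnn w x r)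
        _ = ε * ∑ x : Fin n → X, G (w, x) * A x r := by
            rw [← Finset.sum_mul, mul_comm]
  -- telescoping
  rw [hHqn, hHq0]
  have htel : ent (Hq n) - ent (Hq 0) = ∑ k ∈ Finset.range n, (ent (Hq (k + 1)) - ent (Hq k)) :=
    (Finset.sum_range_sub (fun k => ent (Hq k)) n).symm
  rw [htel]
  calc |∑ k ∈ Finset.range n, (ent (Hq (k + 1)) - ent (Hq k))|
      ≤ ∑ k ∈ Finset.range n, |ent (Hq (k + 1)) - ent (Hq k)| := Finset.abs_sum_le_sum_abs _ _
    _ ≤ ∑ _k ∈ Finset.range n, B := Finset.sum_le_sum fun k hk => hstep k (Finset.mem_range.1 hk)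
    _ = n * B := by rw [Finset.sum_const, Finset.card_range, nsmul_eq_mul]


lemma ent_punitProd {β : Type*} [Fintype β] (p : β → ℝ) :
    ent (fun t : Unit × β => p t.2) = ent p := by
  rw [ent_eq_sum_net, ent_eq_sum_net, Fintype.sum_prod_type]
  simp

noncomputable def PUOutG {U V X : Type*} [Fintype V] (n : ℕ) (PU : U → ℝ) (PVU : U → V → ℝ)
    (E : V → (Fin n → X) → ℝ) : U × (Fin n → X) → ℝ :=
  fun t => (∑ v, E v t.2 * PVU t.1 v) * PU t.1

set_option maxHeartbeats 1000000 in
lemma MI_diff {U V X Y : Type*} [Fintype U] [Fintype V] [Fintype X] [Fintype Y]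
    [Nonempty Y] (n : ℕ)
    (C1 C2 : X → Y → ℝ) (h1 : ∀ x, IsPMF (C1 x)) (h2 : ∀ x, IsPMF (C2 x))
    {ε : ℝ} (hε0 : 0 < ε) (hε1 : ε < 1) (hd : ∀ x, ∑ y, |C1 x y - C2 x y| ≤ ε)
    (PU : U → ℝ) (PVU : U → V → ℝ) (E : V → (Fin n → X) → ℝ)
    (hPU : IsPMF PU) (hPVU : ∀ u, IsPMF (PVU u)) (hE : ∀ v, IsPMF (E v)) :
    |MI (PUOut n C1 PU PVU E) - MI (PUOut n C2 PU PVU E)|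
      ≤ n * (4 * H2 ε + 4 * ε * Real.logb 2 (Fintype.card Y)) := by
  set B := 2 * H2 ε + 2 * ε * Real.logb 2 (Fintype.card Y) with hBdef
  set G : U × (Fin n → X) → ℝ := PUOutG n PU PVU E with hGdef
  have hGapp : ∀ u x, G (u, x) = (∑ v, E v x * PVU u v) * PU u := fun u x => rfl
  have hGP : IsPMF G := by
    constructor
    · intro t
      apply mul_nonneg _ (hPU.1 _)
      exact Finset.sum_nonneg fun v _ => mul_nonneg ((hE v).1 _) ((hPVU _).1 _)
    · rw [Fintype.sum_prod_type]
      have hrow : ∀ u, ∑ x : Fin n → X, G (u, x) = PU u := by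
        intro u
        have e1 : ∀ x : Fin n → X, G (u, x) = (∑ v, E v x * PVU u v) * PU u := fun x => rfl
        rw [Finset.sum_congr rfl fun x _ => e1 x, ← Finset.sum_mul]
        have e2 : ∑ x : Fin n → X, ∑ v, E v x * PVU u v = 1 := by
          rw [Finset.sum_comm]
          calc ∑ v, ∑ x : Fin n → X, E v x * PVU u v = ∑ v, PVU u v := by
                refine Finset.sum_congr rfl fun v _ => ?_
                rw [← Finset.sum_mul, (hE v).2, one_mul]
            _ = 1 := (hPVU u).2
        rw [e2, one_mul]
      rw [Finset.sum_congr rfl fun u _ => hrow u]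
      exact hPU.2
  have hPOut : ∀ C : X → Y → ℝ, PUOut n C PU PVU E
      = fun t : U × (Fin n → Y) => ∑ x : Fin n → X, G (t.1, x) * ∏ i, C (x i) (t.2 i) := by
    intro C
    funext t
    show (∑ v, ∑ x : Fin n → X, (∏ i, C (x i) (t.2 i)) * E v x * PVU t.1 v * PU t.1) = _
    rw [Finset.sum_comm]
    refine Finset.sum_congr rfl fun x _ => ?_
    have e3 : G (t.1, x) * ∏ i, C (x i) (t.2 i)
        = ∑ v, (∏ i, C (x i) (t.2 i)) * E v x * PVU t.1 v * PU t.1 := by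
      rw [hGapp, Finset.sum_mul, Finset.sum_mul]
      exact Finset.sum_congr rfl fun v _ => by ring
    rw [e3]
  have hmargU : ∀ (C : X → Y → ℝ), (∀ x, IsPMF (C x)) → ∀ u : U,
      ∑ y : Fin n → Y, (PUOut n C PU PVU E) (u, y) = ∑ x : Fin n → X, G (u, x) := by
    intro C hC u
    rw [hPOut C]
    dsimp only
    rw [Finset.sum_comm]
    refine Finset.sum_congr rfl fun x _ => ?_
    rw [← Finset.mul_sum]
    have h5 : ∑ yy : Fin n → Y, ∏ i, C (x i) (yy i) = ∏ i : Fin n, ∑ y, C (x i) y :=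
      sum_pi_prod (fun (i : Fin n) y => C (x i) y)
    rw [h5, Finset.prod_congr rfl fun (i : Fin n) _ => (hC (x i)).2, Finset.prod_const_one,
      mul_one]
  have hentU : ent (fun u => ∑ y, (PUOut n C1 PU PVU E) (u, y))
      = ent (fun u => ∑ y, (PUOut n C2 PU PVU E) (u, y)) := by
    have e1 : (fun u => ∑ y, (PUOut n C1 PU PVU E) (u, y))
        = fun u => ∑ x : Fin n → X, G (u, x) := funext fun u => hmargU C1 h1 u
    have e2 : (fun u => ∑ y, (PUOut n C2 PU PVU E) (u, y))
        = fun u => ∑ x : Fin n → X, G (u, x) := funext fun u => hmargU C2 h2 u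
    rw [e1, e2]
  have hjoint : |ent (PUOut n C1 PU PVU E) - ent (PUOut n C2 PU PVU E)| ≤ n * B := by
    rw [hPOut C1, hPOut C2]
    exact ent_tele G hGP C1 C2 h1 h2 hε0 hε1 hd
  set G' : Unit × (Fin n → X) → ℝ := fun t => ∑ u, G (u, t.2) with hG'def
  have hG'P : IsPMF G' := by
    constructor
    · intro t; exact Finset.sum_nonneg fun u _ => hGP.1 _
    · rw [Fintype.sum_prod_type]
      have e4 : ∑ x : Fin n → X, ∑ u, G (u, x) = 1 := by
        rw [Finset.sum_comm, ← Fintype.sum_prod_type]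
        exact hGP.2
      simp only [hG'def]
      simp [e4]
  have hmY : ∀ C : X → Y → ℝ, ent (fun y : Fin n → Y => ∑ u, (PUOut n C PU PVU E) (u, y))
      = ent (fun t : Unit × (Fin n → Y) =>
          ∑ x : Fin n → X, G' (t.1, x) * ∏ i, C (x i) (t.2 i)) := by
    intro C
    rw [← ent_punitProd (fun y : Fin n → Y => ∑ u, (PUOut n C PU PVU E) (u, y))]
    congr 1
    funext t
    rw [hPOut C]
    dsimp only
    rw [Finset.sum_comm]
    refine Finset.sum_congr rfl fun x _ => ?_
    exact (Finset.sum_mul Finset.univ (fun u => G (u, x)) (∏ i, C (x i) (t.2 i))).symm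
  have hmYdiff : |ent (fun y : Fin n → Y => ∑ u, (PUOut n C1 PU PVU E) (u, y))
      - ent (fun y : Fin n → Y => ∑ u, (PUOut n C2 PU PVU E) (u, y))| ≤ n * B := by
    rw [hmY C1, hmY C2]
    exact ent_tele G' hG'P C1 C2 h1 h2 hε0 hε1 hd
  have hMI : MI (PUOut n C1 PU PVU E) - MI (PUOut n C2 PU PVU E)
      = ((ent (fun y : Fin n → Y => ∑ u, (PUOut n C1 PU PVU E) (u, y))
          - ent (fun y : Fin n → Y => ∑ u, (PUOut n C2 PU PVU E) (u, y)))
        - (ent (PUOut n C1 PU PVU E) - ent (PUOut n C2 PU PVU E))) := by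
    simp only [MI]
    rw [hentU]
    ring
  rw [hMI]
  calc |_ - _| ≤ |ent (fun y : Fin n → Y => ∑ u, (PUOut n C1 PU PVU E) (u, y))
          - ent (fun y : Fin n → Y => ∑ u, (PUOut n C2 PU PVU E) (u, y))|
        + |ent (PUOut n C1 PU PVU E) - ent (PUOut n C2 PU PVU E)| := by
        rw [sub_eq_add_neg]
        refine le_trans (abs_add_le _ _) ?_
        rw [abs_neg]
    _ ≤ n * B + n * B := add_le_add hmYdiff hjoint
    _ = n * (4 * H2 ε + 4 * ε * Real.logb 2 (Fintype.card Y)) := by rw [hBdef]; ring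

/-- continuity of the maximum achievable common-message rate of the
compound BCC.  The hypotheses `hDW1, hDW2, hDV1, hDV2` express `D(𝔚₁,𝔚₂) ≤ ε`. -/
theorem common_rate_continuity
    {X Y Z S1 S2 U V : Type*}
    [Fintype X] [Fintype Y] [Fintype Z] [Fintype S1] [Fintype S2] [Fintype U] [Fintype V]
    [Nonempty X] [Nonempty Y] [Nonempty Z] [Nonempty S1] [Nonempty S2] [Nonempty U] [Nonempty V]
    (ε : ℝ) (hε : ε ∈ Set.Ioo (0 : ℝ) 1)
    (W1 : S1 → X → Y → ℝ) (V1 : S1 → X → Z → ℝ)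
    (W2 : S2 → X → Y → ℝ) (V2 : S2 → X → Z → ℝ)
    (hW1 : ∀ s x, IsPMF (W1 s x)) (hV1 : ∀ s x, IsPMF (V1 s x))
    (hW2 : ∀ s x, IsPMF (W2 s x)) (hV2 : ∀ s x, IsPMF (V2 s x))
    (hDW1 : ∀ s2, ∃ s1, ∀ x, ∑ y, |W1 s1 x y - W2 s2 x y| ≤ ε)
    (hDW2 : ∀ s1, ∃ s2, ∀ x, ∑ y, |W1 s1 x y - W2 s2 x y| ≤ ε)
    (hDV1 : ∀ s2, ∃ s1, ∀ x, ∑ z, |V1 s1 x z - V2 s2 x z| ≤ ε)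
    (hDV2 : ∀ s1, ∃ s2, ∀ x, ∑ z, |V1 s1 x z - V2 s2 x z| ≤ ε)
    (n : ℕ) (hn : 1 ≤ n)
    (PU : U → ℝ) (PVU : U → V → ℝ) (E : V → (Fin n → X) → ℝ)
    (hPU : IsPMF PU) (hPVU : ∀ u, IsPMF (PVU u)) (hE : ∀ v, IsPMF (E v)) :
    |(1 / n : ℝ) * (⨅ s : S1, min (MI (PUOut n (W1 s) PU PVU E)) (MI (PUOut n (V1 s) PU PVU E)))
      - (1 / n : ℝ) * (⨅ s : S2, min (MI (PUOut n (W2 s) PU PVU E)) (MI (PUOut n (V2 s) PU PVU E)))|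
      ≤ 4 * H2 ε + 4 * ε * max (Real.logb 2 (Fintype.card Y)) (Real.logb 2 (Fintype.card Z)) := by
  obtain ⟨hε0, hε1⟩ := hε
  have hn0 : (0:ℝ) < (n:ℝ) := by exact_mod_cast Nat.lt_of_lt_of_le Nat.zero_lt_one hn
  set My := Real.logb 2 (Fintype.card Y) with hMy
  set Mz := Real.logb 2 (Fintype.card Z) with hMz
  set Δ : ℝ := (n:ℝ) * (4 * H2 ε + 4 * ε * max My Mz) with hΔ
  have hΔY : ∀ (s1 : S1) (s2 : S2), (∀ x, ∑ y, |W1 s1 x y - W2 s2 x y| ≤ ε) →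
      |MI (PUOut n (W1 s1) PU PVU E) - MI (PUOut n (W2 s2) PU PVU E)| ≤ Δ := by
    intro s1 s2 hdist
    calc |MI (PUOut n (W1 s1) PU PVU E) - MI (PUOut n (W2 s2) PU PVU E)|
        ≤ (n:ℝ) * (4 * H2 ε + 4 * ε * My) :=
          MI_diff n (W1 s1) (W2 s2) (hW1 s1) (hW2 s2) hε0 hε1 hdist PU PVU E hPU hPVU hE
      _ ≤ Δ := by
          rw [hΔ]
          apply mul_le_mul_of_nonneg_left _ hn0.le
          have h1 : My ≤ max My Mz := le_max_left _ _
          have h2 : 4 * ε * My ≤ 4 * ε * max My Mz :=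
            mul_le_mul_of_nonneg_left h1 (by linarith)
          linarith
  have hΔZ : ∀ (s1 : S1) (s2 : S2), (∀ x, ∑ z, |V1 s1 x z - V2 s2 x z| ≤ ε) →
      |MI (PUOut n (V1 s1) PU PVU E) - MI (PUOut n (V2 s2) PU PVU E)| ≤ Δ := by
    intro s1 s2 hdist
    calc |MI (PUOut n (V1 s1) PU PVU E) - MI (PUOut n (V2 s2) PU PVU E)|
        ≤ (n:ℝ) * (4 * H2 ε + 4 * ε * Mz) :=
          MI_diff n (V1 s1) (V2 s2) (hV1 s1) (hV2 s2) hε0 hε1 hdist PU PVU E hPU hPVU hE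
      _ ≤ Δ := by
          rw [hΔ]
          apply mul_le_mul_of_nonneg_left _ hn0.le
          have h1 : Mz ≤ max My Mz := le_max_right _ _
          have h2 : 4 * ε * Mz ≤ 4 * ε * max My Mz :=
            mul_le_mul_of_nonneg_left h1 (by linarith)
          linarith
  set F1 : S1 → ℝ := fun s => min (MI (PUOut n (W1 s) PU PVU E)) (MI (PUOut n (V1 s) PU PVU E))
    with hF1
  set F2 : S2 → ℝ := fun s => min (MI (PUOut n (W2 s) PU PVU E)) (MI (PUOut n (V2 s) PU PVU E))
    with hF2
  have hbdd1 : BddBelow (Set.range F1) := Set.Finite.bddBelow (Set.finite_range F1)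
  have hbdd2 : BddBelow (Set.range F2) := Set.Finite.bddBelow (Set.finite_range F2)
  have h12 : (⨅ s, F1 s) - Δ ≤ (⨅ s, F2 s) := by
    apply le_ciInf
    intro s2
    obtain ⟨s1w, hw⟩ := hDW1 s2
    obtain ⟨s1v, hv⟩ := hDV1 s2
    have hA : (⨅ s, F1 s) ≤ MI (PUOut n (W2 s2) PU PVU E) + Δ := by
      calc (⨅ s, F1 s) ≤ F1 s1w := ciInf_le hbdd1 s1w
        _ ≤ MI (PUOut n (W1 s1w) PU PVU E) := min_le_left _ _
        _ ≤ MI (PUOut n (W2 s2) PU PVU E) + Δ := by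
            have h := le_of_abs_le (hΔY s1w s2 hw)
            linarith
    have hB : (⨅ s, F1 s) ≤ MI (PUOut n (V2 s2) PU PVU E) + Δ := by
      calc (⨅ s, F1 s) ≤ F1 s1v := ciInf_le hbdd1 s1v
        _ ≤ MI (PUOut n (V1 s1v) PU PVU E) := min_le_right _ _
        _ ≤ MI (PUOut n (V2 s2) PU PVU E) + Δ := by
            have h := le_of_abs_le (hΔZ s1v s2 hv)
            linarith
    have : (⨅ s, F1 s) ≤ F2 s2 + Δ := by
      rw [hF2]
      have := le_min hA hB
      rw [min_add_add_right] at this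
      exact this
    linarith
  have h21 : (⨅ s, F2 s) - Δ ≤ (⨅ s, F1 s) := by
    apply le_ciInf
    intro s1
    obtain ⟨s2w, hw⟩ := hDW2 s1
    obtain ⟨s2v, hv⟩ := hDV2 s1
    have hA : (⨅ s, F2 s) ≤ MI (PUOut n (W1 s1) PU PVU E) + Δ := by
      calc (⨅ s, F2 s) ≤ F2 s2w := ciInf_le hbdd2 s2w
        _ ≤ MI (PUOut n (W2 s2w) PU PVU E) := min_le_left _ _
        _ ≤ MI (PUOut n (W1 s1) PU PVU E) + Δ := by
            have h := neg_le_of_abs_le (hΔY s1 s2w hw)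
            linarith
    have hB : (⨅ s, F2 s) ≤ MI (PUOut n (V1 s1) PU PVU E) + Δ := by
      calc (⨅ s, F2 s) ≤ F2 s2v := ciInf_le hbdd2 s2v
        _ ≤ MI (PUOut n (V2 s2v) PU PVU E) := min_le_right _ _
        _ ≤ MI (PUOut n (V1 s1) PU PVU E) + Δ := by
            have h := neg_le_of_abs_le (hΔZ s1 s2v hv)
            linarith
    have : (⨅ s, F2 s) ≤ F1 s1 + Δ := by
      rw [hF1]
      have := le_min hA hB
      rw [min_add_add_right] at this
      exact this
    linarith
  have habs : |(⨅ s, F1 s) - (⨅ s, F2 s)| ≤ Δ := by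
    rw [abs_sub_le_iff]
    constructor <;> linarith
  calc |(1 / n : ℝ) * (⨅ s, F1 s) - (1 / n : ℝ) * (⨅ s, F2 s)|
      = (1 / n : ℝ) * |(⨅ s, F1 s) - (⨅ s, F2 s)| := by
        rw [← mul_sub, abs_mul, abs_of_pos (by positivity : (0:ℝ) < 1 / (n:ℝ))]
    _ ≤ (1 / n : ℝ) * Δ := mul_le_mul_of_nonneg_left habs (by positivity)
    _ = 4 * H2 ε + 4 * ε * max My Mz := by
        rw [hΔ]
        field_simp
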